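/- arXiv:2410.10102 — 6 statements merged into one kernel-verified Lean document; each statement's English description precedes it below -/
import Mathlib

section
/- Let I be a finite index set. For each i ∈ I, let H_i be a real symmetric n_i × n_i matrix and P_i an arbitrary real n_i × n matrix. Set H := Σ_i P_iᵀ H_i P_i and |H_e| := Σ_i P_iᵀ |H_i| P_i, where |H_i| is the absolute-value spectral projection of H_i. Then for every Δ ∈ ℝ and every u ∈ ℝⁿ, if uᵀ |H_e| u ≤ Δ then -Δ ≤ uᵀ H u ≤ Δ. -/
open Matrix

/-- Spectral map: apply `f` to the eigenvalues of a real symmetric matrix,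
given an orthonormal eigendecomposition `A = U * diagonal λ * Uᴴ`. -/
noncomputable def specMap {m : Type*} [Fintype m] [DecidableEq m]
    (A : Matrix m m ℝ) (hA : A.IsHermitian) (f : ℝ → ℝ) : Matrix m m ℝ :=
  (hA.eigenvectorUnitary : Matrix m m ℝ) * Matrix.diagonal (f ∘ hA.eigenvalues) *
    star (hA.eigenvectorUnitary : Matrix m m ℝ)

/-- Absolute-value spectral projection `|A| = Σ_k |λ_k| e_k e_kᵀ`. -/
noncomputable def absProj {m : Type*} [Fintype m] [DecidableEq m]
    (A : Matrix m m ℝ) (hA : A.IsHermitian) : Matrix m m ℝ :=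
  specMap A hA (fun t => |t|)

/-- Clamped spectral projection `A⁺ = Σ_k max(λ_k, 0) e_k e_kᵀ`. -/
noncomputable def clampProj {m : Type*} [Fintype m] [DecidableEq m]
    (A : Matrix m m ℝ) (hA : A.IsHermitian) : Matrix m m ℝ :=
  specMap A hA (fun t => max t 0)

lemma quad_BtDB {m n : Type*} [Fintype m] [Fintype n] [DecidableEq m]
    (B : Matrix m n ℝ) (d : m → ℝ) (v : n → ℝ) :
    v ⬝ᵥ (Bᵀ * Matrix.diagonal d * B) *ᵥ v = ∑ k, d k * (B *ᵥ v) k ^ 2 := by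
  rw [← Matrix.mulVec_mulVec, ← Matrix.mulVec_mulVec, Matrix.dotProduct_mulVec,
    Matrix.vecMul_transpose]
  simp [Matrix.mulVec_diagonal, dotProduct, sq, mul_left_comm]

lemma abs_quad_le {m : Type*} [Fintype m] [DecidableEq m]
    (A : Matrix m m ℝ) (hA : A.IsHermitian) (v : m → ℝ) :
    |v ⬝ᵥ A *ᵥ v| ≤ v ⬝ᵥ absProj A hA *ᵥ v := by
  set U := (hA.eigenvectorUnitary : Matrix m m ℝ) with hU
  have hstar : star U = Uᵀ := by
    ext i j; simp [Matrix.star_apply]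
  have hspec : A = Uᵀᵀ * Matrix.diagonal hA.eigenvalues * Uᵀ := by
    have := hA.spectral_theorem
    simp only [Unitary.conjStarAlgAut_apply, ← hU, hstar, transpose_transpose] at this ⊢
    exact this
  have habs : absProj A hA
      = Uᵀᵀ * Matrix.diagonal ((fun t => |t|) ∘ hA.eigenvalues) * Uᵀ := by
    simp only [absProj, specMap, ← hU, hstar, transpose_transpose]
  rw [habs]
  conv_lhs => rw [hspec]
  rw [quad_BtDB, quad_BtDB]
  simp only [Function.comp_apply]
  refine (Finset.abs_sum_le_sum_abs _ _).trans ?_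
  apply Finset.sum_le_sum
  intro k _
  rw [abs_mul, abs_pow, sq_abs]

/-- The tightened per-element trust-region constraint `uᵀ|H_e|u ≤ Δ` implies the
original generalized trust-region constraint `|uᵀ H u| ≤ Δ`. -/
theorem per_element_constraint_implies_trust_region
    {ι : Type*} [Fintype ι] {N : ℕ} (n : ι → ℕ)
    (H : ∀ i, Matrix (Fin (n i)) (Fin (n i)) ℝ)
    (hH : ∀ i, (H i).IsHermitian)
    (P : ∀ i, Matrix (Fin (n i)) (Fin N) ℝ)
    (Δ : ℝ) (u : Fin N → ℝ)
    (h : u ⬝ᵥ (∑ i, (P i)ᵀ * absProj (H i) (hH i) * P i) *ᵥ u ≤ Δ) :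
    -Δ ≤ u ⬝ᵥ (∑ i, (P i)ᵀ * H i * P i) *ᵥ u
      ∧ u ⬝ᵥ (∑ i, (P i)ᵀ * H i * P i) *ᵥ u ≤ Δ := by
  have key : ∀ (f : ι → Matrix (Fin N) (Fin N) ℝ),
      u ⬝ᵥ (∑ i, f i) *ᵥ u = ∑ i, u ⬝ᵥ (f i) *ᵥ u := by
    intro f
    have h1 : (∑ i, f i) *ᵥ u = ∑ i, f i *ᵥ u := by
      ext j
      simp only [Matrix.mulVec, dotProduct, Matrix.sum_apply, Finset.sum_mul,
        Finset.sum_apply]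
      rw [Finset.sum_comm]
    rw [h1]
    simp only [dotProduct, Finset.sum_apply, Finset.mul_sum]
    rw [Finset.sum_comm]
  have hPq : ∀ (i : ι) (A : Matrix (Fin (n i)) (Fin (n i)) ℝ),
      u ⬝ᵥ ((P i)ᵀ * A * (P i)) *ᵥ u = (P i *ᵥ u) ⬝ᵥ A *ᵥ (P i *ᵥ u) := by
    intro i A
    rw [← Matrix.mulVec_mulVec, ← Matrix.mulVec_mulVec, Matrix.dotProduct_mulVec,
      Matrix.vecMul_transpose]
  have habs : |u ⬝ᵥ (∑ i, (P i)ᵀ * H i * P i) *ᵥ u| ≤ Δ := by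
    rw [key]
    refine (Finset.abs_sum_le_sum_abs _ _).trans ?_
    refine le_trans ?_ h
    rw [key]
    apply Finset.sum_le_sum
    intro i _
    rw [hPq, hPq]
    exact abs_quad_le _ _ _
  exact ⟨neg_le_of_abs_le habs, le_of_abs_le habs⟩
end

section
/- Let I be a finite index set. For each i ∈ I, let A_i be a real symmetric n_i × n_i matrix and P_i an arbitrary real n_i × n matrix. Set A := Σ_i P_iᵀ A_i P_i and A_e⁺ := Σ_i P_iᵀ A_i⁺ P_i, where A_i⁺ is the clamped spectral projection of A_i. Then for every x ∈ ℝⁿ, xᵀ A_e⁺ x ≥ max(xᵀ A x, 0); in particular A_e⁺ is positive semidefinite. -/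
open Matrix

open Matrix in
lemma specMap_posSemidef {m : Type*} [Fintype m] [DecidableEq m]
    (A : Matrix m m ℝ) (hA : A.IsHermitian) (f : ℝ → ℝ) (hf : ∀ t, 0 ≤ f t) :
    (specMap A hA f).PosSemidef := by
  have hd : (Matrix.diagonal (f ∘ hA.eigenvalues)).PosSemidef :=
    posSemidef_diagonal_iff.mpr fun i => hf _
  have := hd.mul_mul_conjTranspose_same (hA.eigenvectorUnitary : Matrix m m ℝ)
  simpa [specMap, Matrix.star_eq_conjTranspose] using this

lemma specMap_sub_posSemidef {m : Type*} [Fintype m] [DecidableEq m]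
    (A : Matrix m m ℝ) (hA : A.IsHermitian) (f : ℝ → ℝ) (hf : ∀ t, t ≤ f t) :
    (specMap A hA f - A).PosSemidef := by
  have hd : (Matrix.diagonal (f ∘ hA.eigenvalues) - Matrix.diagonal (hA.eigenvalues)).PosSemidef := by
    rw [Matrix.diagonal_sub]
    exact posSemidef_diagonal_iff.mpr fun i => sub_nonneg.mpr (hf _)
  have h2 := hd.mul_mul_conjTranspose_same (hA.eigenvectorUnitary : Matrix m m ℝ)
  have hAeq : A = (hA.eigenvectorUnitary : Matrix m m ℝ) *
      Matrix.diagonal (hA.eigenvalues) * star (hA.eigenvectorUnitary : Matrix m m ℝ) := by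
    simpa using hA.spectral_theorem
  have key : specMap A hA f - A =
      (hA.eigenvectorUnitary : Matrix m m ℝ) *
        (Matrix.diagonal (f ∘ hA.eigenvalues) - Matrix.diagonal (hA.eigenvalues)) *
        star (hA.eigenvectorUnitary : Matrix m m ℝ) := by
    rw [Matrix.mul_sub, Matrix.sub_mul, specMap, ← hAeq]
  rw [key, Matrix.star_eq_conjTranspose]
  exact h2


/-- Per-element eigenvalue clamping yields a positive semidefinite assembled
matrix dominating the original assembled quadratic form. -/
theorem per_element_clamp_dominates_and_posSemidef
    {ι : Type*} [Fintype ι] {N : ℕ} (n : ι → ℕ)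
    (A : ∀ i, Matrix (Fin (n i)) (Fin (n i)) ℝ)
    (hA : ∀ i, (A i).IsHermitian)
    (P : ∀ i, Matrix (Fin (n i)) (Fin N) ℝ) :
    (∀ x : Fin N → ℝ,
        max (x ⬝ᵥ (∑ i, (P i)ᵀ * A i * P i) *ᵥ x) 0
          ≤ x ⬝ᵥ (∑ i, (P i)ᵀ * clampProj (A i) (hA i) * P i) *ᵥ x)
      ∧ (∑ i, (P i)ᵀ * clampProj (A i) (hA i) * P i).PosSemidef := by
  have hS : (∑ i, (P i)ᵀ * clampProj (A i) (hA i) * P i).PosSemidef := by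
    refine Finset.sum_induction (fun i => (P i)ᵀ * clampProj (A i) (hA i) * P i)
      Matrix.PosSemidef (fun a b ha hb => ha.add hb) Matrix.PosSemidef.zero (fun i _ => ?_)
    have h := (specMap_posSemidef (A i) (hA i) (fun t => max t 0)
      (fun t => le_max_right t 0)).conjTranspose_mul_mul_same (P i)
    rwa [Matrix.conjTranspose_eq_transpose_of_trivial] at h
  have hD : (∑ i, (P i)ᵀ * clampProj (A i) (hA i) * P i
      - ∑ i, (P i)ᵀ * A i * P i).PosSemidef := by
    rw [← Finset.sum_sub_distrib]
    refine Finset.sum_induction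
      (fun i => (P i)ᵀ * clampProj (A i) (hA i) * P i - (P i)ᵀ * A i * P i)
      Matrix.PosSemidef (fun a b ha hb => ha.add hb) Matrix.PosSemidef.zero (fun i _ => ?_)
    have h := (specMap_sub_posSemidef (A i) (hA i) (fun t => max t 0)
      (fun t => le_max_left t 0)).conjTranspose_mul_mul_same (P i)
    have e : (P i)ᴴ * (specMap (A i) (hA i) (fun t => max t 0) - A i) * P i
        = (P i)ᵀ * clampProj (A i) (hA i) * P i - (P i)ᵀ * A i * P i := by
      rw [Matrix.mul_sub, Matrix.sub_mul, clampProj]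
      rw [Matrix.conjTranspose_eq_transpose_of_trivial]
    rwa [e] at h
  refine ⟨fun x => ?_, hS⟩
  have h1 : 0 ≤ x ⬝ᵥ (∑ i, (P i)ᵀ * clampProj (A i) (hA i) * P i) *ᵥ x := by
    have := hS.dotProduct_mulVec_nonneg x; simpa using this
  have h2 : x ⬝ᵥ (∑ i, (P i)ᵀ * A i * P i) *ᵥ x
      ≤ x ⬝ᵥ (∑ i, (P i)ᵀ * clampProj (A i) (hA i) * P i) *ᵥ x := by
    have := hD.dotProduct_mulVec_nonneg x
    simp only [Matrix.sub_mulVec, dotProduct_sub, star_trivial] at this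
    linarith
  exact max_le h2 h1
end

section
/- Let I be a finite index set. For each i ∈ I, let H_i be a real symmetric n_i × n_i matrix and P_i an arbitrary real n_i × n matrix. Set H := Σ_i P_iᵀ H_i P_i and |H_e| := Σ_i P_iᵀ |H_i| P_i, where |H_i| is the absolute-value spectral projection of H_i. Then for every weight w with 1/2 ≤ w ≤ 1, the matrix (1 - w) H + w |H_e| is positive semidefinite. -/
open Matrix

lemma psd_add {m : Type*} [Fintype m] {A B : Matrix m m ℝ}
    (hA : A.PosSemidef) (hB : B.PosSemidef) : (A + B).PosSemidef := by
  refine ⟨hA.1.add hB.1, fun x => ?_⟩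
  have := add_nonneg (hA.2 x) (hB.2 x)
  exact (hA.add hB).2 x

lemma psd_zero {m : Type*} [Fintype m] [DecidableEq m] :
    (0 : Matrix m m ℝ).PosSemidef := by
  refine ⟨Matrix.isHermitian_zero, fun x => ?_⟩
  simp

lemma interp_posSemidef {m : Type*} [Fintype m] [DecidableEq m]
    (A : Matrix m m ℝ) (hA : A.IsHermitian) (w : ℝ) (hw₁ : 1 / 2 ≤ w) :
    ((1 - w) • A + w • absProj A hA).PosSemidef := by
  set U : Matrix m m ℝ := (hA.eigenvectorUnitary : Matrix m m ℝ) with hU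
  have e1 : (1 - w) • A = U * Matrix.diagonal (fun k => (1 - w) * hA.eigenvalues k) * star U := by
    conv_lhs => rw [hA.spectral_theorem]
    simp only [RCLike.ofReal_real_eq_id, Function.comp_def, id, Unitary.conjStarAlgAut_apply, ← hU]
    rw [show (fun k => (1 - w) * hA.eigenvalues k) = (1 - w) • (fun k => hA.eigenvalues k)
        from rfl, Matrix.diagonal_smul, Matrix.mul_smul, Matrix.smul_mul]
  have e2 : w • absProj A hA
      = U * Matrix.diagonal (fun k => w * |hA.eigenvalues k|) * star U := by
    rw [absProj, specMap]
    simp only [Function.comp_def, ← hU]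
    rw [show (fun k => w * |hA.eigenvalues k|) = w • (fun k => |hA.eigenvalues k|)
        from rfl, Matrix.diagonal_smul, Matrix.mul_smul, Matrix.smul_mul]
  have key : (1 - w) • A + w • absProj A hA =
      U * Matrix.diagonal (fun k => (1 - w) * hA.eigenvalues k + w * |hA.eigenvalues k|)
        * star U := by
    rw [e1, e2, ← Matrix.add_mul, ← Matrix.mul_add, Matrix.diagonal_add]
  rw [key]
  have hdiag : (Matrix.diagonal
      (fun k => (1 - w) * hA.eigenvalues k + w * |hA.eigenvalues k|)).PosSemidef := by
    refine Matrix.posSemidef_diagonal_iff.mpr fun k => ?_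
    nlinarith [abs_nonneg (hA.eigenvalues k), neg_abs_le (hA.eigenvalues k),
      le_abs_self (hA.eigenvalues k)]
  have := hdiag.conjTranspose_mul_mul_same (star U)
  simpa [Matrix.star_eq_conjTranspose] using this

/-- For `1/2 ≤ w ≤ 1`, the interpolated matrix `(1-w) H + w |H_e|` is
positive semidefinite. -/
theorem interpolated_matrix_posSemidef
    {ι : Type*} [Fintype ι] {N : ℕ} (n : ι → ℕ)
    (H : ∀ i, Matrix (Fin (n i)) (Fin (n i)) ℝ)
    (hH : ∀ i, (H i).IsHermitian)
    (P : ∀ i, Matrix (Fin (n i)) (Fin N) ℝ)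
    (w : ℝ) (hw₁ : 1 / 2 ≤ w) (hw₂ : w ≤ 1) :
    ((1 - w) • (∑ i, (P i)ᵀ * H i * P i)
      + w • (∑ i, (P i)ᵀ * absProj (H i) (hH i) * P i)).PosSemidef := by
  have key : ((1 - w) • (∑ i, (P i)ᵀ * H i * P i)
      + w • (∑ i, (P i)ᵀ * absProj (H i) (hH i) * P i))
      = ∑ i, (P i)ᵀ * ((1 - w) • H i + w • absProj (H i) (hH i)) * (P i) := by
    rw [Finset.smul_sum, Finset.smul_sum, ← Finset.sum_add_distrib]
    refine Finset.sum_congr rfl fun i _ => ?_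
    rw [Matrix.mul_add, Matrix.add_mul, Matrix.mul_smul, Matrix.smul_mul,
      Matrix.mul_smul, Matrix.smul_mul]
  rw [key]
  refine Finset.sum_induction _ _ (fun a b => psd_add) psd_zero fun i _ => ?_
  have h := (interp_posSemidef (H i) (hH i) w hw₁).conjTranspose_mul_mul_same (P i)
  simpa using h
end

section
/- Let I be a finite index set, ε > 0, and for each i ∈ I let H_i be a real symmetric n_i × n_i matrix and P_i a real n_i × n matrix. Let H_i^(ε) denote the matrix obtained from H_i by replacing every eigenvalue λ_k of H_i with max(λ_k, ε) in its orthonormal eigendecomposition. If Σ_i P_iᵀ P_i is positive definite, then the assembled matrix Σ_i P_iᵀ H_i^(ε) P_i is positive definite. -/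
open Matrix

/-- ε-clamped spectral projection: replace each eigenvalue `λ_k` by `max (λ_k) ε`. -/
noncomputable def epsClampProj {m : Type*} [Fintype m] [DecidableEq m]
    (A : Matrix m m ℝ) (hA : A.IsHermitian) (ε : ℝ) : Matrix m m ℝ :=
  specMap A hA (fun t => max t ε)

lemma epsClampProj_sub_smul_posSemidef {m : Type*} [Fintype m] [DecidableEq m]
    (A : Matrix m m ℝ) (hA : A.IsHermitian) (ε : ℝ) :
    (epsClampProj A hA ε - ε • 1).PosSemidef := by
  set U : Matrix m m ℝ := (hA.eigenvectorUnitary : Matrix m m ℝ) with hU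
  have hUU : U * star U = 1 := by
    exact hA.eigenvectorUnitary.2.2
  have key : epsClampProj A hA ε - ε • 1
      = U * Matrix.diagonal (fun k => max (hA.eigenvalues k) ε - ε) * star U := by
    have hdiag : Matrix.diagonal (fun k => max (hA.eigenvalues k) ε - ε)
        = Matrix.diagonal ((fun t => max t ε) ∘ hA.eigenvalues) - ε • 1 := by
      ext j k
      rcases eq_or_ne j k with h | h <;>
        simp [h, Matrix.one_apply_ne, Matrix.diagonal_apply_ne]
    rw [hdiag, Matrix.mul_sub, Matrix.sub_mul]
    have : U * (ε • (1 : Matrix m m ℝ)) * star U = ε • 1 := by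
      rw [Matrix.mul_smul, Matrix.mul_one, Matrix.smul_mul, hUU]
    rw [this]
    rfl
  rw [key]
  apply Matrix.PosSemidef.mul_mul_conjTranspose_same
  refine Matrix.posSemidef_diagonal_iff.mpr fun k => ?_
  simp [le_max_right]

/-- Per-element eigenvalue clamping to a positive threshold yields a positive
definite global Hessian, provided every global degree of freedom is selected
by some element. -/
theorem per_element_eps_clamp_posDef
    {ι : Type*} [Fintype ι] {N : ℕ} (n : ι → ℕ) (ε : ℝ) (hε : 0 < ε)
    (H : ∀ i, Matrix (Fin (n i)) (Fin (n i)) ℝ)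
    (hH : ∀ i, (H i).IsHermitian)
    (P : ∀ i, Matrix (Fin (n i)) (Fin N) ℝ)
    (hP : (∑ i, (P i)ᵀ * P i).PosDef) :
    (∑ i, (P i)ᵀ * epsClampProj (H i) (hH i) ε * P i).PosDef := by
  have hsplit : (∑ i, (P i)ᵀ * epsClampProj (H i) (hH i) ε * P i)
      = (∑ i, (P i)ᵀ * (epsClampProj (H i) (hH i) ε - ε • 1) * P i)
        + ε • (∑ i, (P i)ᵀ * P i) := by
    rw [Finset.smul_sum, ← Finset.sum_add_distrib]
    refine Finset.sum_congr rfl fun i _ => ?_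
    rw [Matrix.mul_sub, Matrix.sub_mul]
    have : (P i)ᵀ * (ε • (1 : Matrix (Fin (n i)) (Fin (n i)) ℝ)) * P i
        = ε • ((P i)ᵀ * P i) := by
      rw [Matrix.mul_smul, Matrix.mul_one, Matrix.smul_mul]
    rw [this]
    abel
  rw [hsplit]
  refine Matrix.PosDef.posSemidef_add ?_ ?_
  · refine Finset.sum_induction _ _ (fun a b ha hb => ha.add hb)
      (Matrix.PosSemidef.zero) fun i _ => ?_
    have h1 := (epsClampProj_sub_smul_posSemidef (H i) (hH i) ε).conjTranspose_mul_mul_same (P i)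
    simpa using h1
  · refine ⟨by
      have h := hP.isHermitian
      unfold Matrix.IsHermitian at *
      rw [Matrix.conjTranspose_smul, h]
      congr 1, fun x hx => ?_⟩
    have h2 := mul_pos hε (hP.2 hx)
    simp only [Finsupp.mul_sum, Matrix.smul_apply, smul_eq_mul] at h2 ⊢
    refine lt_of_lt_of_eq h2 (Finsupp.sum_congr fun i _ => Finsupp.sum_congr fun j _ => ?_)
    ring
end

section
/- Let I be a finite index set. For each i ∈ I, let A_i be an invertible real symmetric n_i × n_i matrix and P_i a real n_i × n matrix, and suppose Σ_i P_iᵀ P_i is positive definite. Then |A_e| := Σ_i P_iᵀ |A_i| P_i is positive definite, where |A_i| is the absolute-value spectral projection of A_i. -/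
open Matrix

lemma sum_mulVec_aux {ι m n : Type*} [Fintype ι] [Fintype n]
    (M : ι → Matrix m n ℝ) (x : n → ℝ) :
    (∑ i, M i) *ᵥ x = ∑ i, M i *ᵥ x := by
  ext j
  simp only [Matrix.mulVec, dotProduct, Matrix.sum_apply, Finset.sum_apply,
    Finset.sum_mul]
  exact Finset.sum_comm

lemma dotProduct_sum_aux {ι n : Type*} [Fintype ι] [Fintype n]
    (x : n → ℝ) (v : ι → n → ℝ) :
    x ⬝ᵥ (∑ i, v i) = ∑ i, x ⬝ᵥ v i := by
  simp only [dotProduct, Finset.sum_apply, Finset.mul_sum]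
  exact Finset.sum_comm

/-- A spectral map with positive values on the eigenvalues is positive definite. -/
lemma specMap_posDef {m : Type*} [Fintype m] [DecidableEq m]
    (A : Matrix m m ℝ) (hA : A.IsHermitian) {f : ℝ → ℝ}
    (hf : ∀ k, 0 < f (hA.eigenvalues k)) :
    (specMap A hA f).PosDef := by
  set U : Matrix m m ℝ := (hA.eigenvectorUnitary : Matrix m m ℝ) with hU
  have hD : (Matrix.diagonal (f ∘ hA.eigenvalues)).PosDef :=
    Matrix.posDef_diagonal_iff.mpr fun k => hf k
  have hUU : U * star U = 1 := hA.eigenvectorUnitary.2.2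
  have hspec : specMap A hA f = (Uᴴ)ᴴ * Matrix.diagonal (f ∘ hA.eigenvalues) * Uᴴ := by
    rw [Matrix.conjTranspose_conjTranspose]
    simp only [specMap, star_eq_conjTranspose, hU]
  rw [Matrix.posDef_iff_dotProduct_mulVec]
  constructor
  · rw [hspec]
    exact Matrix.isHermitian_conjTranspose_mul_mul _ hD.isHermitian
  · intro x hx
    have hne : Uᴴ *ᵥ x ≠ 0 := by
      intro h
      apply hx
      have h2 : U *ᵥ (Uᴴ *ᵥ x) = 0 := by rw [h, Matrix.mulVec_zero]
      rwa [Matrix.mulVec_mulVec, ← star_eq_conjTranspose, hUU, Matrix.one_mulVec] at h2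
    have hpos := hD.dotProduct_mulVec_pos hne
    rw [hspec]
    simpa only [star_mulVec, Matrix.dotProduct_mulVec, Matrix.vecMul_vecMul,
      star_eq_conjTranspose] using hpos

lemma absProj_posDef {m : Type*} [Fintype m] [DecidableEq m]
    (A : Matrix m m ℝ) (hA : A.IsHermitian) (hinv : IsUnit A) :
    (absProj A hA).PosDef := by
  apply specMap_posDef
  intro k
  have hdet : IsUnit A.det := (Matrix.isUnit_iff_isUnit_det A).mp hinv
  have hprod : A.det = ∏ i, hA.eigenvalues i := by
    simpa using hA.det_eq_prod_eigenvalues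
  have : hA.eigenvalues k ≠ 0 := by
    intro h
    apply hdet.ne_zero
    rw [hprod]
    exact Finset.prod_eq_zero (Finset.mem_univ k) h
  exact abs_pos.mpr this

/-- If every per-element symmetric matrix is invertible and every global degree
of freedom is selected by some element, the assembled absolute-value projection
is positive definite. -/
theorem per_element_abs_projection_posDef
    {ι : Type*} [Fintype ι] {N : ℕ} (n : ι → ℕ)
    (A : ∀ i, Matrix (Fin (n i)) (Fin (n i)) ℝ)
    (hA : ∀ i, (A i).IsHermitian)
    (hinv : ∀ i, IsUnit (A i))
    (P : ∀ i, Matrix (Fin (n i)) (Fin N) ℝ)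
    (hP : (∑ i, (P i)ᵀ * P i).PosDef) :
    (∑ i, (P i)ᵀ * absProj (A i) (hA i) * P i).PosDef := by
  have habs : ∀ i, (absProj (A i) (hA i)).PosDef := fun i => absProj_posDef _ _ (hinv i)
  rw [Matrix.posDef_iff_dotProduct_mulVec]
  constructor
  · show (∑ i, (P i)ᵀ * absProj (A i) (hA i) * P i)ᴴ = _
    rw [Matrix.conjTranspose_sum]
    refine Finset.sum_congr rfl fun i _ => ?_
    have h := Matrix.isHermitian_conjTranspose_mul_mul (P i) (habs i).isHermitian
    rwa [Matrix.conjTranspose_eq_transpose_of_trivial] at h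
  · intro x hx
    -- quadratic form decomposes as a sum
    have key : ∀ (M : ∀ i, Matrix (Fin (n i)) (Fin (n i)) ℝ),
        star x ⬝ᵥ ((∑ i, (P i)ᵀ * M i * P i) *ᵥ x)
          = ∑ i, star (P i *ᵥ x) ⬝ᵥ (M i *ᵥ (P i *ᵥ x)) := by
      intro M
      rw [sum_mulVec_aux, dotProduct_sum_aux]
      refine Finset.sum_congr rfl fun i _ => ?_
      rw [← Matrix.conjTranspose_eq_transpose_of_trivial]
      simp only [star_mulVec, Matrix.dotProduct_mulVec, Matrix.vecMul_vecMul,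
        star_eq_conjTranspose]
    have hPx : ∃ j, P j *ᵥ x ≠ 0 := by
      by_contra h
      push_neg at h
      have h0 := hP.dotProduct_mulVec_pos hx
      have hzero : star x ⬝ᵥ ((∑ i, (P i)ᵀ * P i) *ᵥ x) = 0 := by
        have he : (∑ i, (P i)ᵀ * P i)
            = ∑ i, (P i)ᵀ * (1 : Matrix (Fin (n i)) (Fin (n i)) ℝ) * P i := by simp
        rw [he, key fun i => (1 : Matrix (Fin (n i)) (Fin (n i)) ℝ)]
        refine Finset.sum_eq_zero fun i _ => ?_
        rw [h i]
        simp
      rw [hzero] at h0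
      exact lt_irrefl _ h0
    obtain ⟨j, hj⟩ := hPx
    rw [key]
    refine Finset.sum_pos' (fun i _ => ?_) ⟨j, Finset.mem_univ j, ?_⟩
    · by_cases h : P i *ᵥ x = 0
      · rw [h]; simp
      · exact le_of_lt ((habs i).dotProduct_mulVec_pos h)
    · exact (habs j).dotProduct_mulVec_pos hj
end

section
/- Let B be a real symmetric positive definite n × n matrix, g ∈ ℝⁿ with g ≠ 0, and Δ > 0. Then the minimum of gᵀ u over the set {u ∈ ℝⁿ : uᵀ B u ≤ Δ} equals -√(Δ · gᵀ B⁻¹ g), and it is attained at u* = -√(Δ / (gᵀ B⁻¹ g)) · B⁻¹ g. -/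
open Matrix

/-- Minimizing the first-order model `gᵀ u` over the trust region
`{u : uᵀ B u ≤ Δ}` yields the value `-√(Δ · gᵀ B⁻¹ g)`, attained at
`u* = -√(Δ / (gᵀ B⁻¹ g)) • B⁻¹ g`. -/
theorem trust_region_linear_min
    {n : ℕ} (B : Matrix (Fin n) (Fin n) ℝ) (hB : B.PosDef)
    (g : Fin n → ℝ) (hg : g ≠ 0) (Δ : ℝ) (hΔ : 0 < Δ) :
    IsLeast ((fun u => g ⬝ᵥ u) '' {u : Fin n → ℝ | u ⬝ᵥ B *ᵥ u ≤ Δ})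
        (-Real.sqrt (Δ * (g ⬝ᵥ B⁻¹ *ᵥ g)))
      ∧ (-Real.sqrt (Δ / (g ⬝ᵥ B⁻¹ *ᵥ g)) • (B⁻¹ *ᵥ g)) ∈
          {u : Fin n → ℝ | u ⬝ᵥ B *ᵥ u ≤ Δ}
      ∧ g ⬝ᵥ (-Real.sqrt (Δ / (g ⬝ᵥ B⁻¹ *ᵥ g)) • (B⁻¹ *ᵥ g))
          = -Real.sqrt (Δ * (g ⬝ᵥ B⁻¹ *ᵥ g)) := by
  set v : Fin n → ℝ := B⁻¹ *ᵥ g with hv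
  set c : ℝ := g ⬝ᵥ v with hcdef
  have hc : 0 < c := by
    have := hB.inv.re_dotProduct_pos hg
    simpa [hcdef, hv] using this
  have hBv : B *ᵥ v = g := by
    rw [hv, mulVec_mulVec, Matrix.mul_nonsing_inv _ (isUnit_iff_ne_zero.mpr hB.det_pos.ne'), one_mulVec]
  -- symmetry of the bilinear form
  have hBt : Bᵀ = B := by
    have := hB.isHermitian.eq
    simpa [Matrix.conjTranspose_eq_transpose_of_trivial] using hB.isHermitian.eq
  have hsym : ∀ x y : Fin n → ℝ, x ⬝ᵥ B *ᵥ y = y ⬝ᵥ B *ᵥ x := by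
    intro x y
    rw [Matrix.dotProduct_mulVec, ← Matrix.mulVec_transpose, hBt, dotProduct_comm]
  have hvBv : v ⬝ᵥ B *ᵥ v = c := by rw [hBv, dotProduct_comm, hcdef]
  set s : ℝ := Real.sqrt (Δ / c) with hs
  have hs2 : s ^ 2 = Δ / c := Real.sq_sqrt (by positivity)
  -- membership
  have hmem : (-s • v) ⬝ᵥ B *ᵥ (-s • v) ≤ Δ := by
    rw [mulVec_smul, smul_dotProduct, dotProduct_smul, smul_eq_mul, smul_eq_mul, hvBv]
    have : -s * (-s * c) = s ^ 2 * c := by ring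
    rw [this, hs2]
    rw [div_mul_cancel₀ _ (ne_of_gt hc)]
  -- value at the minimizer
  have hval : g ⬝ᵥ (-s • v) = -Real.sqrt (Δ * c) := by
    rw [dotProduct_smul, smul_eq_mul, ← hcdef]
    have : Real.sqrt (Δ / c) * c = Real.sqrt (Δ * c) := by
      rw [show Δ * c = Δ / c * c ^ 2 by field_simp,
        Real.sqrt_mul (by positivity), Real.sqrt_sq hc.le]
    rw [neg_mul, this]
  refine ⟨⟨⟨-s • v, hmem, hval⟩, ?_⟩, hmem, hval⟩
  rintro y ⟨u, hu, rfl⟩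
  simp only [Set.mem_setOf_eq] at hu
  set d : ℝ := g ⬝ᵥ u with hd
  have hquad : ∀ t : ℝ, 0 ≤ c * (t * t) + 2 * d * t + u ⬝ᵥ B *ᵥ u := by
    intro t
    have h0 := hB.posSemidef.re_dotProduct_nonneg (u + t • v)
    have h0' : (0:ℝ) ≤ (u + t • v) ⬝ᵥ B *ᵥ (u + t • v) := by simpa using h0
    have hexp : (u + t • v) ⬝ᵥ B *ᵥ (u + t • v)
        = c * (t * t) + 2 * d * t + u ⬝ᵥ B *ᵥ u := by
      have h1 : u ⬝ᵥ B *ᵥ v = d := by rw [hBv, dotProduct_comm, hd]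
      have h2 : v ⬝ᵥ B *ᵥ u = d := by rw [hsym, h1]
      rw [mulVec_add, mulVec_smul, dotProduct_add, add_dotProduct,
        add_dotProduct, dotProduct_smul, smul_dotProduct, smul_dotProduct,
        dotProduct_smul, h1, h2, hvBv]
      simp only [smul_eq_mul]
      ring
    rw [← hexp]; exact h0'
  have hdisc := discrim_le_zero hquad
  have hd2 : d ^ 2 ≤ Δ * c := by
    have huBu : u ⬝ᵥ B *ᵥ u ≤ Δ := hu
    have h1 : d ^ 2 ≤ c * (u ⬝ᵥ B *ᵥ u) := by
      rw [discrim] at hdisc; nlinarith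
    nlinarith [hB.posSemidef.re_dotProduct_nonneg u]
  have habs : |d| ≤ Real.sqrt (Δ * c) := by
    rw [← Real.sqrt_sq_eq_abs]
    exact Real.sqrt_le_sqrt hd2
  have := neg_abs_le d
  linarith [abs_le.mp habs]
end
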